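/- Defective concavity: let Φ ∈ C¹([0,∞)) satisfy Φ(0)=0 and a ≤ Φ'(ξ) ≤ A for all ξ > 0 with 0 < a ≤ A. Let κ : ℝ^d → [0,∞) be a probability density (∫κ = 1) and let u : ℝ^d → [0,∞) be locally integrable such that the convolutions below are defined at x. Then (Φ^{1/2}(u) * κ)(x) ≤ √(A/a) · Φ^{1/2}((u * κ)(x)). -/

import Mathlib

open MeasureTheory

/-- Defective concavity: under the uniform ellipticity
a ≤ Φ' ≤ A, for any probability density κ and nonnegative u,
(Φ^{1/2}(u) * κ)(x) ≤ √(A/a) · Φ^{1/2}((u * κ)(x)). -/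
theorem defective_concavity (d : ℕ) (Φ Φ' : ℝ → ℝ)
    (hcont : ContinuousOn Φ (Set.Ici 0)) (hΦ0 : Φ 0 = 0)
    (hderiv : ∀ ξ : ℝ, 0 < ξ → HasDerivAt Φ (Φ' ξ) ξ)
    (a A : ℝ) (ha : 0 < a) (haA : a ≤ A)
    (hbd : ∀ ξ : ℝ, 0 < ξ → a ≤ Φ' ξ ∧ Φ' ξ ≤ A)
    (κ : (Fin d → ℝ) → ℝ) (hκ0 : ∀ x, 0 ≤ κ x) (hκ1 : ∫ x, κ x = 1)
    (u : (Fin d → ℝ) → ℝ) (hu0 : ∀ x, 0 ≤ u x)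
    (huloc : MeasureTheory.LocallyIntegrable u volume)
    (x : Fin d → ℝ)
    (hint1 : Integrable (fun y => u y * κ (x - y)) volume)
    (hint2 : Integrable (fun y => Real.sqrt (Φ (u y)) * κ (x - y)) volume) :
    ∫ y, Real.sqrt (Φ (u y)) * κ (x - y) ≤
      Real.sqrt (A / a) * Real.sqrt (Φ (∫ y, u y * κ (x - y))) := by
  -- Step A: linear bounds a ξ ≤ Φ ξ ≤ A ξ for ξ ≥ 0
  have hlin : ∀ ξ : ℝ, 0 ≤ ξ → a * ξ ≤ Φ ξ ∧ Φ ξ ≤ A * ξ := by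
    intro ξ hξ
    rcases eq_or_lt_of_le hξ with h | h
    · simp [← h, hΦ0]
    · obtain ⟨c, hc, hc'⟩ := exists_hasDerivAt_eq_slope Φ Φ' h
        (hcont.mono (fun t ht => ht.1))
        (fun t ht => hderiv t ht.1)
      obtain ⟨h1, h2⟩ := hbd c hc.1
      rw [hc'] at h1 h2
      rw [hΦ0, sub_zero, sub_zero] at h1 h2
      constructor
      · have := (le_div_iff₀ h).mp h1
        linarith [this]
      · have := (div_le_iff₀ h).mp h2
        linarith [this]
  set I := ∫ y, u y * κ (x - y) with hI
  have hI0 : 0 ≤ I := integral_nonneg fun y => mul_nonneg (hu0 y) (hκ0 _)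
  -- measurability facts
  have hκint : Integrable κ volume := by
    by_contra h
    rw [integral_undef h] at hκ1; norm_num at hκ1
  have hκxint : Integrable (fun y => κ (x - y)) volume := hκint.comp_sub_left x
  have hf : MemLp (fun y => Real.sqrt (u y * κ (x - y))) 2 volume := by
    refine (memLp_two_iff_integrable_sq ?_).mpr ?_
    · exact (Real.continuous_sqrt.comp_aestronglyMeasurable hint1.aestronglyMeasurable)
    · exact hint1.congr (Filter.Eventually.of_forall fun y =>
        (Real.sq_sqrt (mul_nonneg (hu0 y) (hκ0 _))).symm)
  have hg : MemLp (fun y => Real.sqrt (κ (x - y))) 2 volume := by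
    refine (memLp_two_iff_integrable_sq ?_).mpr ?_
    · exact (Real.continuous_sqrt.comp_aestronglyMeasurable hκxint.aestronglyMeasurable)
    · exact hκxint.congr (Filter.Eventually.of_forall fun y =>
        (Real.sq_sqrt (hκ0 _)).symm)
  -- Cauchy-Schwarz: ∫ √u κ ≤ √I
  have hCS : ∫ y, Real.sqrt (u y) * κ (x - y) ≤ Real.sqrt I := by
    have key : ∀ y, Real.sqrt (u y) * κ (x - y)
        = Real.sqrt (u y * κ (x - y)) * Real.sqrt (κ (x - y)) := by
      intro y
      rw [Real.sqrt_mul (hu0 y), mul_assoc, Real.mul_self_sqrt (hκ0 _)]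
    calc ∫ y, Real.sqrt (u y) * κ (x - y)
        = ∫ y, Real.sqrt (u y * κ (x - y)) * Real.sqrt (κ (x - y)) := by
          simp_rw [key]
      _ ≤ (∫ y, Real.sqrt (u y * κ (x - y)) ^ (2:ℝ)) ^ ((1:ℝ)/2)
          * (∫ y, Real.sqrt (κ (x - y)) ^ (2:ℝ)) ^ ((1:ℝ)/2) := by
          refine integral_mul_le_Lp_mul_Lq_of_nonneg ⟨by norm_num, by norm_num, by norm_num⟩
            (Filter.Eventually.of_forall fun y => Real.sqrt_nonneg _)
            (Filter.Eventually.of_forall fun y => Real.sqrt_nonneg _) ?_ ?_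
          · simpa [ENNReal.ofReal_ofNat] using hf
          · simpa [ENNReal.ofReal_ofNat] using hg
      _ = Real.sqrt I := by
          have e1 : ∀ y, Real.sqrt (u y * κ (x - y)) ^ (2:ℝ) = u y * κ (x - y) := by
            intro y
            rw [Real.rpow_two, Real.sq_sqrt (mul_nonneg (hu0 y) (hκ0 _))]
          have e2 : ∀ y, Real.sqrt (κ (x - y)) ^ (2:ℝ) = κ (x - y) := by
            intro y
            rw [Real.rpow_two, Real.sq_sqrt (hκ0 _)]
          simp_rw [e1, e2]
          have : (∫ y, κ (x - y)) = 1 := by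
            rw [← hκ1]; exact integral_sub_left_eq_self κ volume x
          rw [this, Real.one_rpow, mul_one, Real.sqrt_eq_rpow]
  -- pointwise bound √(Φ(u)) ≤ √A √u
  have hmono : ∫ y, Real.sqrt (Φ (u y)) * κ (x - y)
      ≤ Real.sqrt A * ∫ y, Real.sqrt (u y) * κ (x - y) := by
    rw [← integral_const_mul]
    refine integral_mono_of_nonneg
      (Filter.Eventually.of_forall fun y => mul_nonneg (Real.sqrt_nonneg _) (hκ0 _)) ?_
      (Filter.Eventually.of_forall fun y => ?_)
    · -- integrable: √A * (√u · κ) = √A * (√(uκ) * √κ)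
      have : Integrable (fun y => Real.sqrt (u y * κ (x - y))
          * Real.sqrt (κ (x - y))) volume := by
        have h2 := memLp_one_iff_integrable.mp
          (hf.smul (p := 2) (q := 2) (r := 1) hg)
        exact h2.congr (Filter.Eventually.of_forall fun y => by
          simp [smul_eq_mul, mul_comm])
      refine (this.const_mul (Real.sqrt A)).congr (Filter.Eventually.of_forall fun y => ?_)
      dsimp only
      rw [Real.sqrt_mul (hu0 y), mul_assoc (Real.sqrt (u y)), Real.mul_self_sqrt (hκ0 _)]
    · have h1 : Real.sqrt (Φ (u y)) ≤ Real.sqrt A * Real.sqrt (u y) := by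
        rw [← Real.sqrt_mul (le_trans ha.le haA)]
        exact Real.sqrt_le_sqrt (hlin (u y) (hu0 y)).2
      calc Real.sqrt (Φ (u y)) * κ (x - y)
          ≤ Real.sqrt A * Real.sqrt (u y) * κ (x - y) :=
            mul_le_mul_of_nonneg_right h1 (hκ0 _)
        _ = Real.sqrt A * (Real.sqrt (u y) * κ (x - y)) := by ring
  -- final: √A √I ≤ √(A/a) √(Φ I)
  have hfin : Real.sqrt A * Real.sqrt I ≤ Real.sqrt (A / a) * Real.sqrt (Φ I) := by
    have haI : a * I ≤ Φ I := (hlin I hI0).1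
    have hIle : I ≤ Φ I / a := by
      rw [le_div_iff₀ ha]; linarith [haI]
    calc Real.sqrt A * Real.sqrt I
        ≤ Real.sqrt A * Real.sqrt (Φ I / a) :=
          mul_le_mul_of_nonneg_left (Real.sqrt_le_sqrt hIle) (Real.sqrt_nonneg _)
      _ = Real.sqrt (A / a) * Real.sqrt (Φ I) := by
          have hΦI : 0 ≤ Φ I := le_trans (by positivity) haI
          rw [Real.sqrt_div hΦI, Real.sqrt_div (le_trans ha.le haA)]
          ring
  calc ∫ y, Real.sqrt (Φ (u y)) * κ (x - y)
      ≤ Real.sqrt A * ∫ y, Real.sqrt (u y) * κ (x - y) := hmono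
    _ ≤ Real.sqrt A * Real.sqrt I :=
        mul_le_mul_of_nonneg_left hCS (Real.sqrt_nonneg _)
    _ ≤ Real.sqrt (A / a) * Real.sqrt (Φ I) := hfin
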